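/- If F and F′ are alternating 2-linear forms on ℝ⁴ whose transversal components agree in the three frames μ ∈ {0,1,2}, i.e. F(X⁽μ⁾ᵢ, X⁽μ⁾ⱼ) = F′(X⁽μ⁾ᵢ, X⁽μ⁾ⱼ) for every μ ∈ {0,1,2} and all 1 ≤ i < j ≤ 3, then F = F′; that is, a 2-form on spacetime is reconstructed from its transversal components in only three of the reference frames. -/

import Mathlib

noncomputable section

/-- ℝ⁴, the Minkowski spacetime manifold. -/
abbrev V4 : Type := Fin 4 → ℝ

/-- The standard basis e₀, e₁, e₂, e₃ of ℝ⁴. -/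
def e (i : Fin 4) : V4 := Pi.single i 1

/-- Contravariant part Γ⁽μ⁾ of the frame μ: Γ⁽⁰⁾ = e₀ and, for j ∈ {1,2,3},
Γ⁽ʲ⁾ = γ e₀ + βγ e_j (boost along e_j). -/
def Γfr (β γ : ℝ) (μ : Fin 4) : V4 :=
  if μ = 0 then e 0 else γ • e 0 + (β * γ) • e μ

/-- Spatial vectors X⁽μ⁾ₖ (k = 1,2,3, indexed by `k : Fin 3` ↦ spatial index `k+1`):
for the fiducial frame X⁽⁰⁾ₖ = eₖ; for the frame boosted along e_j,
X⁽ʲ⁾ⱼ = βγ e₀ + γ e_j and X⁽ʲ⁾ₖ = eₖ for k ≠ j. -/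
def Xfr (β γ : ℝ) (μ : Fin 4) (k : Fin 3) : V4 :=
  if k.succ = μ then (β * γ) • e 0 + γ • e μ else e k.succ

/-- Expanding an alternating 2-form in the first slot. -/
lemma expand_fst (f : AlternatingMap ℝ V4 ℝ (Fin 2)) (a b : ℝ) (x y z : V4) :
    f ![a • x + b • y, z] = a * f ![x, z] + b * f ![y, z] := by
  have hu : ∀ w : V4, (![w, z] : Fin 2 → V4) = Function.update ![x, z] 0 w := by
    intro w; ext i; fin_cases i <;> simp
  rw [hu, f.map_update_add, f.map_update_smul, f.map_update_smul, ← hu x, ← hu y,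
    smul_eq_mul, smul_eq_mul]

/-- Expanding an alternating 2-form in the second slot. -/
lemma expand_snd (f : AlternatingMap ℝ V4 ℝ (Fin 2)) (a b : ℝ) (x y z : V4) :
    f ![z, a • x + b • y] = a * f ![z, x] + b * f ![z, y] := by
  have hu : ∀ w : V4, (![z, w] : Fin 2 → V4) = Function.update ![z, x] 1 w := by
    intro w; ext i; fin_cases i <;> simp
  rw [hu, f.map_update_add, f.map_update_smul, f.map_update_smul, ← hu x, ← hu y,
    smul_eq_mul, smul_eq_mul]

/-- Antisymmetry of an alternating 2-form. -/
lemma swap_eq (f : AlternatingMap ℝ V4 ℝ (Fin 2)) (x y : V4) :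
    f ![x, y] = - f ![y, x] := by
  have h := f.map_swap ![y, x] (i := 0) (j := 1) (by decide)
  have h2 : (![y, x] : Fin 2 → V4) ∘ Equiv.swap 0 1 = ![x, y] := by
    ext i; fin_cases i <;> simp
  rw [h2] at h; rw [h]

/-- An alternating 2-form vanishes on a repeated argument. -/
lemma diag_eq_zero (f : AlternatingMap ℝ V4 ℝ (Fin 2)) (x : V4) :
    f ![x, x] = 0 :=
  f.map_eq_zero_of_eq ![x, x] (i := 0) (j := 1) rfl (by decide)

/-- an alternating 2-form on ℝ⁴ is determined by its transversal
components F(X⁽μ⁾ᵢ, X⁽μ⁾ⱼ), 1 ≤ i < j ≤ 3, in the three frames μ ∈ {0,1,2}. -/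
theorem twoForm_determined_by_three_frames
    (β γ : ℝ) (hβ0 : 0 < β) (hβ1 : β < 1)
    (hγ : γ = (1 - β ^ 2) ^ (-(1 / 2) : ℝ))
    (F F' : AlternatingMap ℝ V4 ℝ (Fin 2))
    (h : ∀ μ : Fin 4, μ ≠ 3 → ∀ i j : Fin 3, i < j →
      F ![Xfr β γ μ i, Xfr β γ μ j] = F' ![Xfr β γ μ i, Xfr β γ μ j]) :
    F = F' := by
  have hβ2 : (0:ℝ) < 1 - β ^ 2 := by nlinarith
  have hγ0 : 0 < γ := hγ ▸ Real.rpow_pos_of_pos hβ2 _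
  have hγne : γ ≠ 0 := ne_of_gt hγ0
  have hβγ : β * γ ≠ 0 := mul_ne_zero (ne_of_gt hβ0) hγne
  -- frames
  have hX0 : ∀ k : Fin 3, Xfr β γ 0 k = e k.succ := by intro k; simp [Xfr, Fin.succ_ne_zero]
  have hX11 : Xfr β γ 1 0 = (β * γ) • e 0 + γ • e 1 := by simp [Xfr]
  have hX12 : Xfr β γ 1 1 = e 2 := rfl
  have hX13 : Xfr β γ 1 2 = e 3 := rfl
  have hX21 : Xfr β γ 2 0 = e 1 := rfl
  have hX22 : Xfr β γ 2 1 = (β * γ) • e 0 + γ • e 2 := by simp [Xfr]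
  -- spatial components agree
  have q12 : F ![e 1, e 2] = F' ![e 1, e 2] := by
    have := h 0 (by decide) 0 1 (by decide); rwa [hX0, hX0] at this
  have q13 : F ![e 1, e 3] = F' ![e 1, e 3] := by
    have := h 0 (by decide) 0 2 (by decide); rwa [hX0, hX0] at this
  have q23 : F ![e 2, e 3] = F' ![e 2, e 3] := by
    have := h 0 (by decide) 1 2 (by decide); rwa [hX0, hX0] at this
  -- from frame 1
  have q02 : F ![e 0, e 2] = F' ![e 0, e 2] := by
    have := h 1 (by decide) 0 1 (by decide)
    rw [hX11, hX12, expand_fst, expand_fst] at this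
    exact mul_left_cancel₀ hβγ (by linarith [congrArg (fun x => γ * x) q12])
  have q03 : F ![e 0, e 3] = F' ![e 0, e 3] := by
    have := h 1 (by decide) 0 2 (by decide)
    rw [hX11, hX13, expand_fst, expand_fst] at this
    exact mul_left_cancel₀ hβγ (by linarith [congrArg (fun x => γ * x) q13])
  -- from frame 2
  have q01 : F ![e 0, e 1] = F' ![e 0, e 1] := by
    have := h 2 (by decide) 0 1 (by decide)
    rw [hX21, hX22, expand_snd, expand_snd] at this
    have h10 : F ![e 1, e 0] = F' ![e 1, e 0] :=
      mul_left_cancel₀ hβγ (by linarith [congrArg (fun x => γ * x) q12])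
    rw [swap_eq F, swap_eq F', h10]
  -- all pairs of basis vectors
  have key : ∀ a b : Fin 4, F ![e a, e b] = F' ![e a, e b] := by
    have sw : ∀ a b : Fin 4, F ![e a, e b] = F' ![e a, e b] →
        F ![e b, e a] = F' ![e b, e a] := by
      intro a b hab; rw [swap_eq F, swap_eq F', hab]
    intro a b
    fin_cases a <;> fin_cases b <;>
      first
        | exact (diag_eq_zero F _).trans (diag_eq_zero F' _).symm
        | exact q01 | exact q02 | exact q03 | exact q12 | exact q13 | exact q23
        | exact sw _ _ q01 | exact sw _ _ q02 | exact sw _ _ q03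
        | exact sw _ _ q12 | exact sw _ _ q13 | exact sw _ _ q23
  refine Module.Basis.ext_alternating (Pi.basisFun ℝ (Fin 4)) fun v _ => ?_
  have hv : (fun i => Pi.basisFun ℝ (Fin 4) (v i)) = ![e (v 0), e (v 1)] := by
    ext i; fin_cases i <;> simp [e, Pi.basisFun_apply]
  rw [hv]; exact key (v 0) (v 1)
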